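/- Let K_x = U_x Λ_x U_xᵀ with U_x orthogonal and Λ_x diagonal, Σ a diagonal matrix with positive diagonal entries, and Σ^{-1/2} K_f Σ^{-1/2} = V_f Λ_f V_fᵀ with V_f orthogonal and Λ_f diagonal. Then K_x ⊗ K_f + I_N ⊗ Σ = U (Λ_x ⊗ Λ_f + I_{NM}) Uᵀ where U = U_x ⊗ (Σ^{1/2} V_f). -/
import Mathlib


open Matrix Kronecker

theorem kron_cov_eigendecomp (N M : ℕ)
    (Ux : Matrix (Fin N) (Fin N) ℝ) (hUx : Ux * Uxᵀ = 1 ∧ Uxᵀ * Ux = 1)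
    (lx : Fin N → ℝ) (Kx : Matrix (Fin N) (Fin N) ℝ)
    (hKx : Kx = Ux * diagonal lx * Uxᵀ)
    (σ : Fin M → ℝ) (hσ : ∀ m, 0 < σ m)
    (Vf : Matrix (Fin M) (Fin M) ℝ) (hVf : Vf * Vfᵀ = 1 ∧ Vfᵀ * Vf = 1)
    (lf : Fin M → ℝ) (Kf : Matrix (Fin M) (Fin M) ℝ)
    (hKf : diagonal (fun m => (Real.sqrt (σ m))⁻¹) * Kf *
             diagonal (fun m => (Real.sqrt (σ m))⁻¹) = Vf * diagonal lf * Vfᵀ) :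
    Kx ⊗ₖ Kf + (1 : Matrix (Fin N) (Fin N) ℝ) ⊗ₖ diagonal σ =
      (Ux ⊗ₖ (diagonal (fun m => Real.sqrt (σ m)) * Vf)) *
        (diagonal lx ⊗ₖ diagonal lf + 1) *
      (Ux ⊗ₖ (diagonal (fun m => Real.sqrt (σ m)) * Vf))ᵀ := by
  obtain ⟨hUx1, hUx2⟩ := hUx
  obtain ⟨hVf1, hVf2⟩ := hVf
  have hs : ∀ m, Real.sqrt (σ m) ≠ 0 := fun m => (Real.sqrt_pos.mpr (hσ m)).ne'
  set S : Matrix (Fin M) (Fin M) ℝ := diagonal (fun m => Real.sqrt (σ m)) with hSdef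
  set Sinv : Matrix (Fin M) (Fin M) ℝ := diagonal (fun m => (Real.sqrt (σ m))⁻¹)
    with hSinvdef
  have hSS : S * Sinv = 1 := by
    rw [hSdef, hSinvdef, diagonal_mul_diagonal, ← diagonal_one]
    exact congrArg _ (funext fun m => mul_inv_cancel₀ (hs m))
  have hSS' : Sinv * S = 1 := by
    rw [hSdef, hSinvdef, diagonal_mul_diagonal, ← diagonal_one]
    exact congrArg _ (funext fun m => inv_mul_cancel₀ (hs m))
  have hST : Sᵀ = S := diagonal_transpose _
  have hS2 : S * S = diagonal σ := by
    rw [hSdef, diagonal_mul_diagonal]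
    exact congrArg _ (funext fun m => Real.mul_self_sqrt (hσ m).le)
  have hKf' : Kf = S * (Vf * diagonal lf * Vfᵀ) * S := by
    rw [← hKf]
    calc Kf = (S * Sinv) * Kf * (Sinv * S) := by rw [hSS, hSS', one_mul, mul_one]
    _ = S * (Sinv * Kf * Sinv) * S := by noncomm_ring
  rw [hKx, hKf', ← kroneckerMap_transpose, transpose_mul, hST,
    Matrix.mul_add, mul_one, Matrix.add_mul]
  congr 1
  · rw [← mul_kronecker_mul, ← mul_kronecker_mul]
    noncomm_ring
  · rw [← mul_kronecker_mul, hUx1, ← mul_assoc, mul_assoc S Vf, hVf1, mul_one, hS2]
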